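/- The Laplace mechanism is ε-differentially private: if f : χ → ℝ has L1-sensitivity at most Δ (i.e. |f(x) − f(x')| ≤ Δ for all neighbouring x, x'), and A(x) = f(x) + Y where Y ~ Lap(Δ/ε), then for all neighbouring x, x' and all measurable Out ⊆ ℝ, Pr(A(x) ∈ Out) ≤ e^ε · Pr(A(x') ∈ Out). -/

import Mathlib

open MeasureTheory

/-- The Laplace distribution with mean 0 and scale `b`, given by the density
`x ↦ (1/(2b)) · exp(−|x|/b)` with respect to Lebesgue measure. -/
noncomputable def laplaceMeasure (b : ℝ) : Measure ℝ :=
  volume.withDensity fun x => ENNReal.ofReal ((2 * b)⁻¹ * Real.exp (-|x| / b))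

lemma laplace_map_apply (b c : ℝ) {Out : Set ℝ} (hOut : MeasurableSet Out) :
    Measure.map (fun y => c + y) (laplaceMeasure b) Out =
      ∫⁻ y in Out, ENNReal.ofReal ((2 * b)⁻¹ * Real.exp (-|y - c| / b)) := by
  rw [laplaceMeasure, Measure.map_apply (measurable_const_add c) hOut,
    withDensity_apply _ ((measurable_const_add c) hOut)]
  have hmp : MeasurePreserving (fun y : ℝ => c + y) volume volume :=
    measurePreserving_add_left volume c
  have hemb : MeasurableEmbedding (fun y : ℝ => c + y) :=
    (Homeomorph.addLeft c).measurableEmbedding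
  have := hmp.setLIntegral_comp_preimage_emb hemb
    (fun y => ENNReal.ofReal ((2 * b)⁻¹ * Real.exp (-|y - c| / b))) Out
  simp only [add_sub_cancel_left] at this
  exact this

/-- The Laplace mechanism is `ε`-differentially private: if `f` has
L1-sensitivity at most `Δ` over a neighbouring relation `N`, and
`A(x) = f(x) + Y` with `Y ~ Lap(Δ/ε)`, then for all neighbouring `x, x'` and all
measurable `Out ⊆ ℝ`, `Pr(A(x) ∈ Out) ≤ e^ε · Pr(A(x') ∈ Out)`. -/
theorem laplace_mechanism_dp {χ : Type*} (N : χ → χ → Prop) (f : χ → ℝ)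
    (Δ ε : ℝ) (hΔ : 0 < Δ) (hε : 0 < ε)
    (hsens : ∀ x x', N x x' → |f x - f x'| ≤ Δ) :
    ∀ x x', N x x' → ∀ Out : Set ℝ, MeasurableSet Out →
      Measure.map (fun y => f x + y) (laplaceMeasure (Δ / ε)) Out ≤
        ENNReal.ofReal (Real.exp ε) *
          Measure.map (fun y => f x' + y) (laplaceMeasure (Δ / ε)) Out := by
  intro x x' hN Out hOut
  set b := Δ / ε with hb
  have hbpos : 0 < b := div_pos hΔ hε
  rw [laplace_map_apply b (f x) hOut, laplace_map_apply b (f x') hOut,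
    ← lintegral_const_mul' _ _ ENNReal.ofReal_ne_top]
  refine setLIntegral_mono_ae (by fun_prop) (Filter.Eventually.of_forall fun y _ => ?_)
  rw [← ENNReal.ofReal_mul (Real.exp_pos ε).le]
  apply ENNReal.ofReal_le_ofReal
  rw [← mul_assoc, mul_comm (Real.exp ε), mul_assoc]
  refine mul_le_mul_of_nonneg_left ?_ (by positivity)
  rw [← Real.exp_add]
  apply Real.exp_le_exp.mpr
  have hεb : ε * b = Δ := by rw [hb]; field_simp [hε.ne']
  have key : |y - f x'| - |y - f x| ≤ Δ := by
    have h1 := abs_sub_abs_le_abs_sub (y - f x') (y - f x)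
    rw [show (y - f x') - (y - f x) = f x - f x' by ring] at h1
    linarith [hsens x x' hN]
  have h2 : (ε + -|y - f x'| / b) * b = ε * b + -|y - f x'| := by field_simp
  rw [div_le_iff₀ hbpos, h2]
  linarith
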